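/- Let I and J be intervals of ℝ, let u : J → I be a C¹ function, let x₀ be an interior point of J, and let f : I → ℝ be strictly C^{0,α} at u(x₀). Suppose moreover that for some γ ∈ (0,1] and ρ ≥ 0 one has |u′(x) − u′(y)| ≤ ρ|x − y|^γ for all x, y ∈ J, that α > 1/(1+γ), and that u′(x₀) = 0. Then f∘u is differentiable at x₀ and (f∘u)′(x₀) = 0. -/

import Mathlib

open Set Filter Topology

/-- `f` is strictly `C^{0,α}` at `x₀`, relative to the set `I`:
`limsup_{x→x₀, x ∈ I} |f x - f x₀|/|x-x₀|^α < ∞` and, for every `β > α`,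
`limsup_{x→x₀, x ∈ I} |f x - f x₀|/|x-x₀|^β = ∞`. -/
def StrictHolderAt (f : ℝ → ℝ) (I : Set ℝ) (α x₀ : ℝ) : Prop :=
  (∃ M : ℝ, ∀ᶠ x in 𝓝[I \ {x₀}] x₀, |f x - f x₀| / |x - x₀| ^ α ≤ M) ∧
  ∀ β : ℝ, α < β → ∀ M : ℝ, ∃ᶠ x in 𝓝[I \ {x₀}] x₀, M < |f x - f x₀| / |x - x₀| ^ β

/-- If `u : J → I` is `C¹` with `γ`-Hölder derivative (constant `ρ`), `x₀` is interior
to `J`, `f` is strictly `C^{0,α}` at `u x₀` with `α > 1/(1+γ)`, and `u' x₀ = 0`, then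
`f ∘ u` is differentiable at `x₀` with `(f ∘ u)' x₀ = 0`. -/
theorem hasDerivAt_comp_of_deriv_eq_zero (I J : Set ℝ) (hI : I.OrdConnected)
    (hJ : J.OrdConnected) (u : ℝ → ℝ) (hu : ContDiffOn ℝ 1 u J) (huJI : MapsTo u J I)
    (x₀ : ℝ) (hx₀ : x₀ ∈ interior J) (α γ ρ : ℝ) (hγ : γ ∈ Ioc (0 : ℝ) 1) (hρ : 0 ≤ ρ)
    (hHold : ∀ x ∈ J, ∀ y ∈ J, |derivWithin u J x - derivWithin u J y| ≤ ρ * |x - y| ^ γ)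
    (hα : 1 / (1 + γ) < α) (f : ℝ → ℝ) (hf : StrictHolderAt f I α (u x₀))
    (hu0 : derivWithin u J x₀ = 0) :
    HasDerivAt (f ∘ u) 0 x₀ := by
  obtain ⟨hγ0, hγ1⟩ := hγ
  have hγ1' : (0:ℝ) < 1 + γ := by linarith
  have hα0 : 0 < α := lt_trans (by positivity) hα
  set κ : ℝ := (γ + 1) * α with hκdef
  have hκ1 : 1 < κ := by
    have := (div_lt_iff₀ hγ1').mp hα
    nlinarith
  obtain ⟨⟨M, hM⟩, -⟩ := hf
  set y₀ := u x₀ with hy₀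
  set M' := max M 0 with hM'def
  have hM'0 : 0 ≤ M' := le_max_right _ _
  -- a closed interval around x₀ inside J
  obtain ⟨δ, hδ0, hδJ⟩ : ∃ δ > 0, Icc (x₀ - δ) (x₀ + δ) ⊆ J := by
    rcases Metric.mem_nhds_iff.1 (mem_interior_iff_mem_nhds.1 hx₀) with ⟨ε, hε, hball⟩
    refine ⟨ε / 2, by positivity, fun x hx => hball ?_⟩
    have h1 := hx.1; have h2 := hx.2
    simp only [Metric.mem_ball, Real.dist_eq]
    rw [abs_sub_lt_iff]; constructor <;> linarith
  have hIccJ : ∀ x ∈ Icc (x₀ - δ) (x₀ + δ), x ∈ J := fun x hx => hδJ hx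
  have hx₀J : x₀ ∈ J := interior_subset hx₀
  -- key estimate on u
  have key : ∀ x ∈ Icc (x₀ - δ) (x₀ + δ), |u x - u x₀| ≤ ρ * |x - x₀| ^ (γ + 1) := by
    intro x hx
    rcases eq_or_ne x x₀ with rfl | hne
    · simp [Real.zero_rpow (by positivity : γ + 1 ≠ 0)]
    have hle : x₀ - δ ≤ x₀ + δ := by linarith
    have hsub : uIcc x₀ x ⊆ Icc (x₀ - δ) (x₀ + δ) := by
      rw [← uIcc_of_le hle]
      exact uIcc_subset_uIcc (by rw [uIcc_of_le hle]; exact ⟨by linarith, by linarith⟩)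
        (by rw [uIcc_of_le hle]; exact hx)
    have hsubJ : uIcc x₀ x ⊆ J := hsub.trans hδJ
    have hmvt := Convex.norm_image_sub_le_of_norm_hasDerivWithin_le
      (f := u) (f' := derivWithin u J) (C := ρ * |x - x₀| ^ γ) (s := uIcc x₀ x)
      (fun t ht => ((hu.differentiableOn one_ne_zero t (hsubJ ht)).hasDerivWithinAt).mono hsubJ)
      (fun t ht => ?_) (convex_uIcc _ _) (left_mem_uIcc) (right_mem_uIcc)
    · calc |u x - u x₀| ≤ ρ * |x - x₀| ^ γ * ‖x - x₀‖ := hmvt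
        _ = ρ * |x - x₀| ^ (γ + 1) := by
          rw [Real.norm_eq_abs, mul_assoc]
          congr 1
          rw [Real.rpow_add (abs_pos.2 (sub_ne_zero.2 hne)), Real.rpow_one]
    · have h1 : |derivWithin u J t| ≤ ρ * |t - x₀| ^ γ := by
        have := hHold t (hsubJ ht) x₀ hx₀J
        rwa [hu0, sub_zero] at this
      have h2 : |t - x₀| ≤ |x - x₀| := by
        rcases le_total x₀ x with h | h
        · rw [uIcc_of_le h] at ht
          rw [abs_of_nonneg (by linarith [ht.1]), abs_of_nonneg (by linarith)]
          linarith [ht.2]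
        · rw [uIcc_of_ge h] at ht
          rw [abs_of_nonpos (by linarith [ht.2]), abs_of_nonpos (by linarith)]
          linarith [ht.1]
      calc ‖derivWithin u J t‖ ≤ ρ * |t - x₀| ^ γ := h1
        _ ≤ ρ * |x - x₀| ^ γ := by
          have := Real.rpow_le_rpow (abs_nonneg _) h2 hγ0.le
          gcongr
  -- continuity of u at x₀
  have hcont : ContinuousAt u x₀ :=
    (hu.continuousOn.mono hδJ).continuousAt
      (Icc_mem_nhds (by linarith) (by linarith))
  -- Hölder bound for f near y₀
  have hMnear : ∀ᶠ y in 𝓝 y₀, y ∈ I \ {y₀} → |f y - f y₀| ≤ M' * |y - y₀| ^ α := by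
    filter_upwards [eventually_nhdsWithin_iff.1 hM] with y hy hyI
    have h := hy hyI
    have hy0 : y ≠ y₀ := hyI.2
    have hpos : 0 < |y - y₀| ^ α := Real.rpow_pos_of_pos (abs_pos.2 (sub_ne_zero.2 hy0)) α
    have := (div_le_iff₀ hpos).1 h
    calc |f y - f y₀| ≤ M * |y - y₀| ^ α := this
      _ ≤ M' * |y - y₀| ^ α := by gcongr; exact le_max_left _ _
  -- pull back via continuity
  have hpull : ∀ᶠ x in 𝓝 x₀, u x ∈ I \ {y₀} → |f (u x) - f y₀| ≤ M' * |u x - y₀| ^ α :=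
    hcont.eventually hMnear
  -- final: slope tends to 0
  rw [hasDerivAt_iff_tendsto_slope]
  apply squeeze_zero_norm'
    (a := fun x => M' * ρ ^ α * |x - x₀| ^ (κ - 1))
  · filter_upwards [eventually_nhdsWithin_of_eventually_nhds hpull,
      eventually_nhdsWithin_of_eventually_nhds
        (Icc_mem_nhds (by linarith : x₀ - δ < x₀) (by linarith : x₀ < x₀ + δ)),
      self_mem_nhdsWithin] with x hx hxIcc (hne : x ≠ x₀)
    have hxabs : 0 < |x - x₀| := abs_pos.2 (sub_ne_zero.2 hne)
    have hxJ : x ∈ J := hδJ hxIcc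
    have hnum : |f (u x) - f y₀| ≤ M' * ρ ^ α * |x - x₀| ^ κ := by
      rcases eq_or_ne (u x) y₀ with h | h
      · rw [h, sub_self, abs_zero]; positivity
      · have hxI : u x ∈ I \ {y₀} := ⟨huJI hxJ, h⟩
        have h1 := hx hxI
        have h2 : |u x - y₀| ^ α ≤ (ρ * |x - x₀| ^ (γ + 1)) ^ α :=
          Real.rpow_le_rpow (abs_nonneg _) (key x hxIcc) hα0.le
        have h3 : (ρ * |x - x₀| ^ (γ + 1)) ^ α = ρ ^ α * |x - x₀| ^ κ := by
          rw [Real.mul_rpow hρ (Real.rpow_nonneg (abs_nonneg _) _)]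
          congr 1
          rw [← Real.rpow_mul (abs_nonneg _)]
        calc |f (u x) - f y₀| ≤ M' * |u x - y₀| ^ α := h1
          _ ≤ M' * (ρ ^ α * |x - x₀| ^ κ) := by
            rw [← h3]; gcongr
          _ = M' * ρ ^ α * |x - x₀| ^ κ := by ring
    have hslope : ‖slope (f ∘ u) x₀ x‖ = |f (u x) - f y₀| / |x - x₀| := by
      rw [slope_def_field]
      simp only [Function.comp_apply, Real.norm_eq_abs, abs_div]; rfl
    rw [hslope, div_le_iff₀ hxabs]
    calc |f (u x) - f y₀| ≤ M' * ρ ^ α * |x - x₀| ^ κ := hnum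
      _ = M' * ρ ^ α * |x - x₀| ^ (κ - 1) * |x - x₀| := by
        have hsplit : |x - x₀| ^ κ = |x - x₀| ^ (κ - 1) * |x - x₀| := by
          rw [← Real.rpow_add_one (ne_of_gt hxabs) (κ - 1), sub_add_cancel]
        rw [hsplit]; ring
  · have h1 : Tendsto (fun x => |x - x₀|) (𝓝[≠] x₀) (𝓝 0) := by
      have h0 : Tendsto (fun x : ℝ => x - x₀) (𝓝 x₀) (𝓝 (x₀ - x₀)) :=
        (continuous_id.sub continuous_const).tendsto x₀
      rw [sub_self] at h0
      simpa using h0.abs.mono_left nhdsWithin_le_nhds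
    have h2 : Tendsto (fun x => |x - x₀| ^ (κ - 1)) (𝓝[≠] x₀) (𝓝 0) := by
      have hc : ContinuousAt (fun t : ℝ => t ^ (κ - 1)) 0 :=
        Real.continuousAt_rpow_const 0 (κ - 1) (Or.inr (by linarith))
      have := hc.tendsto.comp h1
      simpa [Function.comp_def, Real.zero_rpow (by linarith : κ - 1 ≠ 0)] using this
    have := h2.const_mul (M' * ρ ^ α)
    simpa using this
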